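/- Suppose Σ_{r∈R} q(r) ≥ n = |A|, let ω : A → R be an endowment, and let μ be the assignment produced by the serial priority rule for an enumeration a_1, …, a_n of A that is endowment-conserving for μ and ω. Then μ is core stable: there is no nonempty coalition A′ ⊆ A together with a reallocation μ′ : A′ → R of the coalition's endowed units — i.e., |{a ∈ A′ : μ′(a) = r}| ≤ |{c ∈ A′ : ω(c) = r}| for every resource r — such that μ′(a) ≻_a μ(a) for every a ∈ A′. -/

import Mathlib

/-- Resource `r` is available at step `k` if fewer than `q r` of the agents processed
before step `k` have been assigned `r`. -/
def Available {R : Type*} [DecidableEq R] {n : ℕ} (q : R → ℕ) (μ : Fin n → R)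
    (k : Fin n) (r : R) : Prop :=
  (Finset.univ.filter fun j : Fin n => j < k ∧ μ j = r).card < q r

/-- `μ` is produced by the serial priority rule: each agent `k` receives an available
resource at its step, and that resource is the `pref k`-greatest available one. -/
def IsSerial {R : Type*} [DecidableEq R] {n : ℕ} (pref : Fin n → R → R → Prop)
    (q : R → ℕ) (μ : Fin n → R) : Prop :=
  ∀ k : Fin n, Available q μ k (μ k) ∧
    ∀ r : R, Available q μ k r → r ≠ μ k → pref k (μ k) r

/-- The enumeration is endowment-conserving for `μ` and `ω`: for every resource `r` and
every step `k`, the units of `r` consumed before step `k` together with the units of `r`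
still endowed to agents at steps `≥ k` do not exceed the capacity of `r`. -/
def EndowmentConserving {R : Type*} [DecidableEq R] {n : ℕ} (q : R → ℕ)
    (μ ω : Fin n → R) : Prop :=
  ∀ (r : R) (k : Fin n),
    (Finset.univ.filter fun j : Fin n => j < k ∧ μ j = r).card +
      (Finset.univ.filter fun j : Fin n => k ≤ j ∧ ω j = r).card ≤ q r

/-- if total capacity is at least the number of agents `n ≥ 1`, `ω` is an
endowment, and `μ` is produced by the serial priority rule for an enumeration that is
endowment-conserving for `μ` and `ω`, then `μ` is core stable: no nonempty coalition
`A'` can reallocate only its own endowed units among its members so that every member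
is strictly better off than under `μ`. -/
theorem serial_rule_core_stable
    {R : Type*} [Fintype R] [DecidableEq R] {n : ℕ} (hn : 1 ≤ n)
    (q : R → ℕ) (hq : n ≤ ∑ r : R, q r)
    (pref : Fin n → R → R → Prop)
    (hpref : ∀ a : Fin n, IsStrictTotalOrder R (pref a))
    (ω μ : Fin n → R) (hserial : IsSerial pref q μ)
    (hcons : EndowmentConserving q μ ω) :
    ¬ ∃ (A' : Finset (Fin n)) (μ' : Fin n → R), A'.Nonempty ∧
      (∀ r : R, (A'.filter fun a => μ' a = r).card ≤ (A'.filter fun c => ω c = r).card) ∧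
      ∀ a ∈ A', pref a (μ' a) (μ a) := by
  rintro ⟨A', μ', hne, hre, hbetter⟩
  set k := A'.min' hne with hk
  have hkA : k ∈ A' := A'.min'_mem hne
  set r := μ' k with hr
  -- some coalition member c owns r, and c ≥ k
  have h1 : 1 ≤ (A'.filter fun a => μ' a = r).card := by
    refine Finset.card_pos.mpr ⟨k, ?_⟩
    simp [hkA, hr]
  have h2 : 1 ≤ (A'.filter fun c => ω c = r).card := le_trans h1 (hre r)
  obtain ⟨c, hc⟩ := Finset.card_pos.mp h2
  rw [Finset.mem_filter] at hc
  have hck : k ≤ c := A'.min'_le c hc.1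
  have hsub : 1 ≤ (Finset.univ.filter fun j : Fin n => k ≤ j ∧ ω j = r).card := by
    refine Finset.card_pos.mpr ⟨c, ?_⟩
    simp [hck, hc.2]
  have havail : Available q μ k r := by
    have := hcons r k
    unfold Available
    omega
  have hirr := (hpref k).irrefl
  have htr := (hpref k).trans
  rcases eq_or_ne r (μ k) with heq | hneq
  · exact hirr (μ k) (heq ▸ hbetter k hkA)
  · exact hirr (μ k) (htr _ _ _ ((hserial k).2 r havail hneq) (hbetter k hkA))
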